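/- Let v ≥ 2 and let a, b : Fin v → EuclideanSpace ℝ (Fin (v−1)) be regular simplices that are linked with inner products γ, ζ (γ ≠ ζ). Then γ·ζ = −1/(v−1), and for every j, writing k_j := |{i | ⟪a i, b j⟫ = γ}|, one has ζ²·(v−1)·(v−k_j) = k_j. -/

import Mathlib

open RealInnerProductSpace

/-- A regular simplex in `ℝ^(v-1)`: a family of `v` unit vectors with pairwise
inner products `-1/(v-1)`. -/
def IsRegularSimplex (v : ℕ) (a : Fin v → EuclideanSpace ℝ (Fin (v - 1))) : Prop :=
  (∀ i, ‖a i‖ = 1) ∧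
  ∀ i j, i ≠ j → ⟪a i, a j⟫ = -1 / ((v : ℝ) - 1)

/-- Two regular simplices are linked with inner products `γ, ζ` if every inner product
between a vector of one and a vector of the other equals `γ` or `ζ`. -/
def AreLinked (v : ℕ) (a b : Fin v → EuclideanSpace ℝ (Fin (v - 1))) (γ ζ : ℝ) : Prop :=
  ∀ i j, ⟪a i, b j⟫ = γ ∨ ⟪a i, b j⟫ = ζ

lemma simplex_sum_zero(v : ℕ) (hv : 2 ≤ v)
    (a : Fin v → EuclideanSpace ℝ (Fin (v - 1))) (ha : IsRegularSimplex v a) :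
    ∑ i, a i = 0 := by
  have hv1 : ((v : ℝ) - 1) ≠ 0 := by
    have : (2 : ℝ) ≤ v := by exact_mod_cast hv
    linarith
  have key : ∀ i, ⟪a i, ∑ j, a j⟫ = 0 := by
    intro i
    rw [inner_sum, ← Finset.sum_erase_add _ _ (Finset.mem_univ i)]
    have h1 : ⟪a i, a i⟫ = (1:ℝ) := by
      rw [real_inner_self_eq_norm_sq, ha.1 i]; norm_num
    have h2 : ∑ j ∈ Finset.univ.erase i, ⟪a i, a j⟫ = ((v:ℝ) - 1) * (-1 / ((v:ℝ)-1)) := by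
      rw [Finset.sum_congr rfl (fun j hj => ha.2 i j (Ne.symm (Finset.ne_of_mem_erase hj)))]
      rw [Finset.sum_const, Finset.card_erase_of_mem (Finset.mem_univ i), Finset.card_univ,
        Fintype.card_fin, nsmul_eq_mul, Nat.cast_sub (by omega)]
      norm_num
    rw [h1, h2]
    field_simp
    norm_num
  have : ⟪∑ i, a i, ∑ j, a j⟫ = (0:ℝ) := by
    rw [sum_inner]
    simp [key]
  exact inner_self_eq_zero.mp this

lemma simplex_span(v : ℕ) (hv : 2 ≤ v)
    (a : Fin v → EuclideanSpace ℝ (Fin (v - 1))) (ha : IsRegularSimplex v a) :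
    Submodule.span ℝ (Set.range a) = ⊤ := by
  have hvR : (2 : ℝ) ≤ v := by exact_mod_cast hv
  have hv1 : ((v : ℝ) - 1) ≠ 0 := by linarith
  have hcast : v - 1 + 1 = v := by omega
  set c : Fin (v-1) → Fin v := fun i => Fin.cast hcast i.succ with hc
  have hcinj : Function.Injective c := fun i j h => by
    apply Fin.succ_injective
    exact (Fin.cast_injective hcast) h
  set e : Fin (v-1) → EuclideanSpace ℝ (Fin (v - 1)) := fun i => a (c i) with he
  have hli : LinearIndependent ℝ e := by
    rw [Fintype.linearIndependent_iff]
    intro g hg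
    set T : ℝ := ∑ i, g i with hT
    have hgj : ∀ j, g j * (v:ℝ) = T := by
      intro j
      have h0 : ∑ i, g i * ⟪e j, e i⟫ = 0 := by
        have : ⟪e j, ∑ i, g i • e i⟫ = (0:ℝ) := by rw [hg]; simp
        rw [inner_sum] at this
        simpa only [real_inner_smul_right] using this
      rw [← Finset.sum_erase_add _ _ (Finset.mem_univ j)] at h0
      have hd : ⟪e j, e j⟫ = (1:ℝ) := by
        rw [real_inner_self_eq_norm_sq, ha.1 (c j)]; norm_num
      have ho : ∑ i ∈ Finset.univ.erase j, g i * ⟪e j, e i⟫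
          = (T - g j) * (-1 / ((v:ℝ)-1)) := by
        rw [Finset.sum_congr rfl (fun i hi => by
          rw [ha.2 (c j) (c i) (fun hh => (Finset.ne_of_mem_erase hi) (hcinj hh).symm)]),
          ← Finset.sum_mul, Finset.sum_erase_eq_sub (Finset.mem_univ j)]
      rw [ho, hd] at h0
      field_simp at h0
      linarith
    have hT0 : T = 0 := by
      have hsum : T * (v:ℝ) = ((v:ℝ) - 1) * T := by
        calc T * (v:ℝ) = ∑ i : Fin (v-1), g i * (v:ℝ) := by rw [← Finset.sum_mul]
        _ = ∑ i : Fin (v-1), T := Finset.sum_congr rfl (fun i _ => hgj i)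
        _ = ((v:ℝ) - 1) * T := by
            rw [Finset.sum_const, Finset.card_univ, Fintype.card_fin, nsmul_eq_mul,
              Nat.cast_sub (by omega), Nat.cast_one]
      nlinarith
    intro i
    have := hgj i
    rw [hT0] at this
    have hvne : (v:ℝ) ≠ 0 := by linarith
    exact (mul_eq_zero.mp this).resolve_right hvne
  have hsp : Submodule.span ℝ (Set.range e) = ⊤ := by
    apply Submodule.eq_top_of_finrank_eq
    rw [finrank_span_eq_card hli, finrank_euclideanSpace_fin, Fintype.card_fin]
  have : Set.range e ⊆ Set.range a := by
    rintro x ⟨i, rfl⟩; exact ⟨c i, rfl⟩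
  exact top_le_iff.mp (hsp ▸ Submodule.span_mono this)

lemma simplex_frame(v : ℕ) (hv : 2 ≤ v)
    (a : Fin v → EuclideanSpace ℝ (Fin (v - 1))) (ha : IsRegularSimplex v a)
    (x : EuclideanSpace ℝ (Fin (v - 1))) :
    ∑ i, ⟪a i, x⟫ ^ 2 = ((v:ℝ) / ((v:ℝ) - 1)) * ‖x‖ ^ 2 := by
  have hvR : (2 : ℝ) ≤ v := by exact_mod_cast hv
  have hv1 : ((v : ℝ) - 1) ≠ 0 := by linarith
  set cc : ℝ := (v:ℝ) / ((v:ℝ) - 1) with hcc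
  set L : EuclideanSpace ℝ (Fin (v - 1)) →ₗ[ℝ] EuclideanSpace ℝ (Fin (v - 1)) :=
    { toFun := fun y => (∑ i, ⟪a i, y⟫ • a i) - cc • y
      map_add' := by
        intro y z
        simp only [inner_add_right, add_smul, Finset.sum_add_distrib, smul_add]
        abel
      map_smul' := by
        intro r y
        simp only [real_inner_smul_right, mul_smul, ← Finset.smul_sum, RingHom.id_apply,
          smul_sub]
        rw [smul_comm r cc] } with hL
  have hker : ∀ j, L (a j) = 0 := by
    intro j
    have hsum : ∑ i ∈ Finset.univ.erase j, a i = -a j := by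
      rw [Finset.sum_erase_eq_sub (Finset.mem_univ j), simplex_sum_zero v hv a ha]
      abel
    have : L (a j) = (∑ i, ⟪a i, a j⟫ • a i) - cc • a j := rfl
    rw [this, ← Finset.sum_erase_add _ _ (Finset.mem_univ j)]
    have h1 : ⟪a j, a j⟫ = (1:ℝ) := by
      rw [real_inner_self_eq_norm_sq, ha.1 j]; norm_num
    have h2 : ∑ i ∈ Finset.univ.erase j, ⟪a i, a j⟫ • a i
        = (-1 / ((v:ℝ)-1)) • (-a j) := by
      rw [← hsum, Finset.smul_sum]
      exact Finset.sum_congr rfl (fun i hi => by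
        rw [ha.2 i j (Finset.ne_of_mem_erase hi)])
    rw [h1, h2, one_smul]
    have hc1 : cc = 1 + 1/((v:ℝ)-1) := by rw [hcc]; field_simp; ring
    rw [hc1]
    module
  have hL0 : ∀ y, L y = 0 := by
    have hle : Submodule.span ℝ (Set.range a) ≤ LinearMap.ker L :=
      Submodule.span_le.mpr (by rintro y ⟨i, rfl⟩; exact hker i)
    rw [simplex_span v hv a ha] at hle
    intro y
    exact LinearMap.mem_ker.mp (hle Submodule.mem_top)
  have heq : (∑ i, ⟪a i, x⟫ • a i) = cc • x := by
    have := hL0 x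
    rw [hL] at this
    simpa [sub_eq_zero] using this
  calc ∑ i, ⟪a i, x⟫ ^ 2 = ⟪∑ i, ⟪a i, x⟫ • a i, x⟫ := by
        rw [sum_inner]
        exact Finset.sum_congr rfl (fun i _ => by rw [real_inner_smul_left, sq])
    _ = ⟪cc • x, x⟫ := by rw [heq]
    _ = cc * ‖x‖ ^ 2 := by rw [real_inner_smul_left, real_inner_self_eq_norm_sq]

theorem stmt_7 (v : ℕ) (hv : 2 ≤ v) (γ ζ : ℝ) (hγζ : γ ≠ ζ)
    (a b : Fin v → EuclideanSpace ℝ (Fin (v - 1)))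
    (ha : IsRegularSimplex v a) (hb : IsRegularSimplex v b)
    (hlink : AreLinked v a b γ ζ) :
    γ * ζ = -1 / ((v : ℝ) - 1) ∧
    ∀ j, ζ ^ 2 * ((v : ℝ) - 1) * ((v : ℝ) - ({i | ⟪a i, b j⟫ = γ}.ncard : ℝ)) =
      ({i | ⟪a i, b j⟫ = γ}.ncard : ℝ) := by
  classical
  have hvR : (2 : ℝ) ≤ v := by exact_mod_cast hv
  have hv1 : ((v : ℝ) - 1) ≠ 0 := by linarith
  have hv0 : (v : ℝ) ≠ 0 := by linarith
  -- per-j facts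
  have main : ∀ j : Fin v,
      (({i | ⟪a i, b j⟫ = γ}.ncard : ℝ)) * γ
        + ((v:ℝ) - ({i | ⟪a i, b j⟫ = γ}.ncard : ℝ)) * ζ = 0 ∧
      ((({i | ⟪a i, b j⟫ = γ}.ncard : ℝ)) * γ ^ 2
        + ((v:ℝ) - ({i | ⟪a i, b j⟫ = γ}.ncard : ℝ)) * ζ ^ 2) * ((v:ℝ) - 1) = v := by
    intro j
    set P : Fin v → Prop := fun i => ⟪a i, b j⟫ = γ with hP
    set S : Finset (Fin v) := Finset.univ.filter P with hS
    have hncard : ({i | ⟪a i, b j⟫ = γ}.ncard : ℝ) = (S.card : ℝ) := by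
      norm_cast
      rw [← Set.ncard_coe_finset]
      congr 1
      ext i
      simp [hS, hP]
    have hk_le : S.card ≤ v := le_trans (Finset.card_filter_le _ _) (by simp)
    have hcard_not : (Finset.univ.filter (fun i => ¬ P i)).card = v - S.card := by
      rw [Finset.filter_not, Finset.card_sdiff_of_subset (Finset.filter_subset _ _)]
      simp [hS]
    have hcast : ((v - S.card : ℕ) : ℝ) = (v:ℝ) - (S.card : ℝ) := by
      rw [Nat.cast_sub hk_le]
    have hζ : ∀ i ∈ Finset.univ.filter (fun i => ¬ P i), ⟪a i, b j⟫ = ζ := by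
      intro i hi
      have := (hlink i j).resolve_left (Finset.mem_filter.mp hi).2
      exact this
    have hγ' : ∀ i ∈ S, ⟪a i, b j⟫ = γ := fun i hi => (Finset.mem_filter.mp hi).2
    have hsum_yes : ∀ (f : Fin v → ℝ) (c : ℝ), (∀ i ∈ Finset.univ.filter P, f i = c) →
        ∑ i ∈ Finset.univ.filter P, f i = (S.card : ℝ) * c := by
      intro f c h
      rw [Finset.sum_congr rfl h, Finset.sum_const, nsmul_eq_mul, hS]
    have hsum_no : ∀ (f : Fin v → ℝ) (c : ℝ),
        (∀ i ∈ Finset.univ.filter (fun i => ¬ P i), f i = c) →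
        ∑ i ∈ Finset.univ.filter (fun i => ¬ P i), f i = ((v:ℝ) - (S.card : ℝ)) * c := by
      intro f c h
      rw [Finset.sum_congr rfl h, Finset.sum_const, nsmul_eq_mul, hcard_not, hcast]
    constructor
    · rw [hncard]
      have h0 : ∑ i, ⟪a i, b j⟫ = 0 := by
        rw [← sum_inner, simplex_sum_zero v hv a ha, inner_zero_left]
      rw [← Finset.sum_filter_add_sum_filter_not Finset.univ P (fun i => ⟪a i, b j⟫),
        hsum_yes _ γ hγ', hsum_no _ ζ hζ] at h0
      linarith
    · rw [hncard]
      have h0 : ∑ i, ⟪a i, b j⟫ ^ 2 = (v:ℝ) / ((v:ℝ) - 1) := by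
        rw [simplex_frame v hv a ha (b j), hb.1 j]
        norm_num
      rw [← Finset.sum_filter_add_sum_filter_not Finset.univ P (fun i => ⟪a i, b j⟫ ^ 2),
        hsum_yes _ (γ ^ 2) (fun i hi => by rw [hγ' i hi]),
        hsum_no _ (ζ ^ 2) (fun i hi => by rw [hζ i hi])] at h0
      field_simp at h0
      linarith
  have claim2 : ∀ j : Fin v,
      ζ ^ 2 * ((v : ℝ) - 1) * ((v : ℝ) - ({i | ⟪a i, b j⟫ = γ}.ncard : ℝ)) =
        ({i | ⟪a i, b j⟫ = γ}.ncard : ℝ) := by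
    intro j
    obtain ⟨eq1, eq2⟩ := main j
    set k : ℝ := ({i | ⟪a i, b j⟫ = γ}.ncard : ℝ) with hk
    have h4 : (v:ℝ) * (ζ ^ 2 * ((v:ℝ) - 1) * ((v:ℝ) - k)) = (v:ℝ) * k := by
      linear_combination k * eq2 - (((v:ℝ)-1) * (k*γ - ((v:ℝ)-k)*ζ)) * eq1
    exact mul_left_cancel₀ hv0 h4
  refine ⟨?_, claim2⟩
  set j0 : Fin v := ⟨0, by omega⟩ with hj0
  obtain ⟨eq1, eq2⟩ := main j0
  have hc2 := claim2 j0
  set k : ℝ := ({i | ⟪a i, b j0⟫ = γ}.ncard : ℝ) with hk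
  have hkne : k ≠ 0 := by
    intro h
    rw [h] at eq1 eq2
    have hζ0 : ζ = 0 := by
      have : (v:ℝ) * ζ = 0 := by linarith
      rcases mul_eq_zero.mp this with h' | h'
      · exact absurd h' hv0
      · exact h'
    rw [hζ0] at eq2
    nlinarith [eq2, hvR]
  have : k * (γ * ζ) = k * (-1 / ((v:ℝ) - 1)) := by
    have h5 : k * γ = -(((v:ℝ) - k) * ζ) := by linarith
    have h6 : ((v:ℝ) - k) * ζ ^ 2 = k / ((v:ℝ) - 1) := by
      field_simp
      linear_combination hc2
    calc k * (γ * ζ) = (k * γ) * ζ := by ring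
      _ = -(((v:ℝ) - k) * ζ ^ 2) := by rw [h5]; ring
      _ = -(k / ((v:ℝ) - 1)) := by rw [h6]
      _ = k * (-1 / ((v:ℝ) - 1)) := by ring
  exact mul_left_cancel₀ hkne this
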